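/- For any ε ∈ (0,1), every finite graph G = (V,E) admits a partition of V into clusters V₁, ..., V_k such that the number of inter-cluster edges is at most ε|E|, and for each i either |V_i| = 1 or the induced subgraph G[V_i] has conductance at least ε/(4 log |V|). -/

import Mathlib

open Finset

/-- Number of ordered adjacent pairs `(a, b)` with `a ∈ A`, `b ∈ B`.  For disjoint
`A`, `B` this equals `|E(A,B)|`. -/
def eB {V : Type*} [DecidableEq V] (G : SimpleGraph V) [DecidableRel G.Adj]
    (A B : Finset V) : ℕ :=
  ((A ×ˢ B).filter fun p => G.Adj p.1 p.2).card

section Aux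

variable {V : Type*} [DecidableEq V] (G : SimpleGraph V) [DecidableRel G.Adj]

lemma eB_comm (A B : Finset V) : eB G A B = eB G B A := by
  unfold eB
  apply Finset.card_bij' (fun p _ => Prod.swap p) (fun p _ => Prod.swap p)
  · intro p hp
    simp only [mem_filter, mem_product] at hp ⊢
    exact ⟨⟨hp.1.2, hp.1.1⟩, hp.2.symm⟩
  · intro p hp
    simp only [mem_filter, mem_product] at hp ⊢
    exact ⟨⟨hp.1.2, hp.1.1⟩, hp.2.symm⟩
  · intro p _; rfl
  · intro p _; rfl

lemma eB_union_left {A B : Finset V} (C : Finset V) (h : Disjoint A B) :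
    eB G (A ∪ B) C = eB G A C + eB G B C := by
  unfold eB
  rw [Finset.union_product, Finset.filter_union, Finset.card_union_of_disjoint]
  apply Finset.disjoint_left.2
  intro p hp hp'
  simp only [mem_filter, mem_product] at hp hp'
  exact Finset.disjoint_left.1 h hp.1.1 hp'.1.1

lemma eB_union_right (A : Finset V) {B C : Finset V} (h : Disjoint B C) :
    eB G A (B ∪ C) = eB G A B + eB G A C := by
  rw [eB_comm, eB_comm G A B, eB_comm G A C]
  exact eB_union_left G A h

lemma eB_sdiff_left {S t : Finset V} (hSt : S ⊆ t) (C : Finset V) :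
    eB G t C = eB G S C + eB G (t \ S) C := by
  rw [← eB_union_left G C Finset.disjoint_sdiff, Finset.union_sdiff_of_subset hSt]

lemma eB_sdiff_right (A : Finset V) {S t : Finset V} (hSt : S ⊆ t) :
    eB G A t = eB G A S + eB G A (t \ S) := by
  rw [← eB_union_right G A Finset.disjoint_sdiff, Finset.union_sdiff_of_subset hSt]

lemma sum_eB (S t : Finset V) : (∑ v ∈ S, eB G {v} t) = eB G S t := by
  induction S using Finset.induction_on with
  | empty => simp [eB]
  | insert _ _ h =>
    rename_i a S _
    rw [Finset.sum_insert h, Finset.insert_eq,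
      eB_union_left G t (Finset.disjoint_singleton_left.2 h)]
    omega

lemma eB_singleton_univ [Fintype V] (x : V) : eB G {x} Finset.univ = G.degree x := by
  unfold eB
  rw [Finset.singleton_product, Finset.filter_map, Finset.card_map]
  simp only [Function.comp_def, Function.Embedding.coeFn_mk]
  rw [← SimpleGraph.neighborFinset_eq_filter, SimpleGraph.degree]

lemma eB_univ_univ [Fintype V] : eB G Finset.univ Finset.univ = 2 * G.edgeFinset.card := by
  rw [← sum_eB]
  simp_rw [eB_singleton_univ]
  exact G.sum_degrees_eq_twice_card_edges

lemma rhs_nonneg {φ : ℝ} (hφ : 0 ≤ φ) (n : ℕ) :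
    0 ≤ 2 * φ * (n : ℝ) * Real.logb 2 n := by
  rcases Nat.eq_zero_or_pos n with h | h
  · simp [h]
  · have h1 : (1 : ℝ) ≤ n := by exact_mod_cast h
    have := Real.logb_nonneg (b := 2) (by norm_num) h1
    positivity

/-- The key real arithmetic for the charging argument. -/
lemma arith {φ v a c a' b' : ℝ} (hφ : 0 ≤ φ)
    (ha : a = a' + c) (hv : v = a + c + b')
    (ha' : a' = 0 ∨ 1 ≤ a') (hb' : b' = 0 ∨ 1 ≤ b')
    (hc0 : 0 ≤ c) (h2a : 2 * a ≤ v) (hca : c ≤ φ * a) (ha1 : 1 ≤ a) :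
    2 * c + (2 * φ * a' * Real.logb 2 a' + 2 * φ * b' * Real.logb 2 b')
      ≤ 2 * φ * v * Real.logb 2 v := by
  have ha'0 : 0 ≤ a' := by rcases ha' with h | h <;> linarith
  have hb'0 : 0 ≤ b' := by rcases hb' with h | h <;> linarith
  have hv2 : 2 ≤ v := by linarith
  have hLv : 1 ≤ Real.logb 2 v := by
    rw [show (1:ℝ) = Real.logb 2 2 by simp]
    exact Real.logb_le_logb_of_le (by norm_num) (by norm_num) hv2
  -- bound T1
  have hT1 : 2 * φ * a' * Real.logb 2 a' ≤ 2 * φ * a' * (Real.logb 2 v - 1) := by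
    rcases ha' with h | h
    · simp [h]
    · have hlog : Real.logb 2 a' ≤ Real.logb 2 v - 1 := by
        have : Real.logb 2 a' ≤ Real.logb 2 (v / 2) :=
          Real.logb_le_logb_of_le (by norm_num) (by linarith) (by linarith)
        rwa [Real.logb_div (by linarith) (by norm_num),
          Real.logb_self_eq_one (by norm_num)] at this
      have : 0 ≤ 2 * φ * a' := by positivity
      nlinarith
  have hT2 : 2 * φ * b' * Real.logb 2 b' ≤ 2 * φ * b' * Real.logb 2 v := by
    rcases hb' with h | h
    · simp [h]
    · have hlog : Real.logb 2 b' ≤ Real.logb 2 v :=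
        Real.logb_le_logb_of_le (by norm_num) (by linarith) (by linarith)
      have : 0 ≤ 2 * φ * b' := by positivity
      nlinarith
  have key : 2 * c + 2 * φ * a' * (Real.logb 2 v - 1) + 2 * φ * b' * Real.logb 2 v
      ≤ 2 * φ * v * Real.logb 2 v := by
    have h1 : 0 ≤ φ * c := mul_nonneg hφ hc0
    have hca' : c ≤ φ * a' + φ * c := by rw [ha, mul_add] at hca; linarith
    set L := Real.logb 2 v with hLdef
    rw [hv, ha]
    nlinarith [mul_nonneg h1 (show (0:ℝ) ≤ 2 * L - 1 by linarith)]
  linarith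

/-- the number of separated ordered adjacent pairs inside `t` -/
def cutCard (t : Finset V) (P : Finpartition t) : ℕ :=
  ((t ×ˢ t).filter fun p : V × V =>
      G.Adj p.1 p.2 ∧ ∀ s ∈ P.parts, ¬ (p.1 ∈ s ∧ p.2 ∈ s)).card

/-- Main recursive decomposition lemma. -/
lemma decomp (φ : ℝ) (hφ : 0 ≤ φ) (t : Finset V) :
    ∃ P : Finpartition t,
      ((cutCard G t P : ℝ) ≤ 2 * φ * (eB G t t) * Real.logb 2 (eB G t t)) ∧
      ∀ s ∈ P.parts, ∀ S ⊆ s, S.Nonempty → S ≠ s →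
          φ * min (eB G S s : ℝ) (eB G (s \ S) s : ℝ) ≤ (eB G S (s \ S) : ℝ) := by
  induction t using Finset.strongInduction with
  | _ t ih =>
    by_cases hgood : ∀ S ⊆ t, S.Nonempty → S ≠ t →
        φ * min (eB G S t : ℝ) (eB G (t \ S) t : ℝ) ≤ (eB G S (t \ S) : ℝ)
    · rcases Finset.eq_empty_or_nonempty t with rfl | hne
      · refine ⟨⊥, ?_, ?_⟩
        · simpa [cutCard] using rhs_nonneg hφ (eB G ∅ ∅)
        · intro s hs
          rw [Finpartition.mem_bot_iff] at hs
          simp at hs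
      · refine ⟨Finpartition.indiscrete (Finset.nonempty_iff_ne_empty.1 hne), ?_, ?_⟩
        · have : cutCard G t (Finpartition.indiscrete
              (Finset.nonempty_iff_ne_empty.1 hne)) = 0 := by
            rw [cutCard, Finset.card_eq_zero, Finset.filter_eq_empty_iff]
            intro p hp
            rw [Finset.mem_product] at hp
            rintro ⟨-, hsep⟩
            exact hsep t (by simp [Finpartition.indiscrete]) ⟨hp.1, hp.2⟩
          rw [this]
          exact_mod_cast rhs_nonneg hφ (eB G t t)
        · intro s hs
          have : s = t := by
            simpa [Finpartition.indiscrete] using hs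
          subst this
          exact hgood
    · push_neg at hgood
      obtain ⟨S₀, hS₀t, hS₀ne, hS₀neq, hcut₀⟩ := hgood
      -- pick the side with smaller volume
      have hcompl_ne : (t \ S₀).Nonempty := by
        rw [Finset.sdiff_nonempty]
        intro h
        exact hS₀neq (Finset.Subset.antisymm hS₀t h)
      have hmin : min (eB G S₀ t : ℝ) (eB G (t \ S₀) t : ℝ) =
          min (eB G (t \ S₀) t : ℝ) (eB G (t \ (t \ S₀)) t : ℝ) := by
        rw [Finset.sdiff_sdiff_eq_self hS₀t, min_comm]
      obtain ⟨S, hSt, hSne, hScompl, hvol, hcut⟩ :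
          ∃ S ⊆ t, S.Nonempty ∧ (t \ S).Nonempty ∧
            (eB G S t : ℝ) ≤ (eB G (t \ S) t : ℝ) ∧
            (eB G S (t \ S) : ℝ) < φ * (eB G S t : ℝ) := by
        rcases le_total (eB G S₀ t : ℝ) (eB G (t \ S₀) t : ℝ) with h | h
        · exact ⟨S₀, hS₀t, hS₀ne, hcompl_ne, h,
            lt_of_lt_of_le hcut₀ (by rw [min_eq_left h]) ⟩
        · refine ⟨t \ S₀, Finset.sdiff_subset, hcompl_ne, ?_, ?_, ?_⟩
          · rwa [Finset.sdiff_sdiff_eq_self hS₀t]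
          · rw [Finset.sdiff_sdiff_eq_self hS₀t]; exact h
          · rw [Finset.sdiff_sdiff_eq_self hS₀t, ← eB_comm]
            calc (eB G S₀ (t \ S₀) : ℝ) < φ * min (eB G S₀ t : ℝ) (eB G (t \ S₀) t : ℝ) :=
                  hcut₀
              _ ≤ φ * (eB G (t \ S₀) t : ℝ) :=
                  mul_le_mul_of_nonneg_left (min_le_right _ _) hφ
      -- recursion
      obtain ⟨P₁, hP₁cut, hP₁good⟩ := ih S (Finset.ssubset_iff_subset_ne.2 ⟨hSt, by
        intro h; subst h; exact hScompl.ne_empty (Finset.sdiff_self S)⟩)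
      obtain ⟨P₂, hP₂cut, hP₂good⟩ := ih (t \ S) (by
        apply Finset.sdiff_ssubset hSt hSne)
      -- combine
      have hSne' : S ≠ (⊥ : Finset V) := Finset.nonempty_iff_ne_empty.1 hSne
      have hdisj : Disjoint S (t \ S) := Finset.disjoint_sdiff
      have hsup : S ⊔ (t \ S) = t := Finset.union_sdiff_of_subset hSt
      set Ppair : Finpartition t :=
        (Finpartition.indiscrete hSne').extend
          (Finset.nonempty_iff_ne_empty.1 hScompl) hdisj hsup with hPpair
      have hSneqcompl : S ≠ t \ S := by
        intro h
        obtain ⟨x, hx⟩ := hSne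
        have := Finset.disjoint_left.1 hdisj hx
        rw [← h] at this
        exact this hx
      have hparts : Ppair.parts = insert (t \ S) {S} := by
        rw [hPpair, Finpartition.extend_parts]; rfl
      set Q : ∀ i ∈ Ppair.parts, Finpartition i := fun i hi =>
        if h : i = S then (P₁.copy h.symm) else
          (P₂.copy (by
            rw [hparts] at hi
            rcases Finset.mem_insert.1 hi with h' | h'
            · exact h'.symm
            · exact absurd (Finset.mem_singleton.1 h') h)) with hQ
      have hSmem : S ∈ Ppair.parts := by rw [hparts]; simp
      have hCmem : (t \ S) ∈ Ppair.parts := by rw [hparts]; simp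
      have hQS : ∀ h, (Q S h).parts = P₁.parts := by
        intro h; rw [hQ]; simp only [dif_pos]; rfl
      have hQC : ∀ h, (Q (t \ S) h).parts = P₂.parts := by
        intro h; rw [hQ]; simp only [dif_neg (Ne.symm hSneqcompl)]; rfl
      refine ⟨Ppair.bind Q, ?_, ?_⟩
      · -- cut bound
        have hmemP₁ : ∀ u ∈ P₁.parts, u ∈ (Ppair.bind Q).parts := by
          intro u hu
          rw [Finpartition.mem_bind]
          exact ⟨S, hSmem, by rw [hQS hSmem]; exact hu⟩
        have hmemP₂ : ∀ u ∈ P₂.parts, u ∈ (Ppair.bind Q).parts := by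
          intro u hu
          rw [Finpartition.mem_bind]
          exact ⟨t \ S, hCmem, by rw [hQC hCmem]; exact hu⟩
        have hsubset : ((t ×ˢ t).filter fun p : V × V =>
              G.Adj p.1 p.2 ∧ ∀ s ∈ (Ppair.bind Q).parts, ¬ (p.1 ∈ s ∧ p.2 ∈ s)) ⊆
            (((S ×ˢ S).filter fun p : V × V =>
              G.Adj p.1 p.2 ∧ ∀ s ∈ P₁.parts, ¬ (p.1 ∈ s ∧ p.2 ∈ s)) ∪
             ((t \ S) ×ˢ (t \ S)).filter (fun p : V × V =>
              G.Adj p.1 p.2 ∧ ∀ s ∈ P₂.parts, ¬ (p.1 ∈ s ∧ p.2 ∈ s))) ∪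
            (((S ×ˢ (t \ S)).filter fun p : V × V => G.Adj p.1 p.2) ∪
             ((t \ S) ×ˢ S).filter fun p : V × V => G.Adj p.1 p.2) := by
          intro p hp
          simp only [Finset.mem_filter, Finset.mem_product] at hp
          obtain ⟨⟨hp1, hp2⟩, hadj, hsep⟩ := hp
          by_cases h1 : p.1 ∈ S <;> by_cases h2 : p.2 ∈ S
          · apply Finset.mem_union_left; apply Finset.mem_union_left
            simp only [Finset.mem_filter, Finset.mem_product]
            exact ⟨⟨h1, h2⟩, hadj, fun s hs hmem => hsep s (hmemP₁ s hs) hmem⟩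
          · apply Finset.mem_union_right; apply Finset.mem_union_left
            simp only [Finset.mem_filter, Finset.mem_product, Finset.mem_sdiff]
            exact ⟨⟨h1, hp2, h2⟩, hadj⟩
          · apply Finset.mem_union_right; apply Finset.mem_union_right
            simp only [Finset.mem_filter, Finset.mem_product, Finset.mem_sdiff]
            exact ⟨⟨⟨hp1, h1⟩, h2⟩, hadj⟩
          · apply Finset.mem_union_left; apply Finset.mem_union_right
            simp only [Finset.mem_filter, Finset.mem_product, Finset.mem_sdiff]
            exact ⟨⟨⟨hp1, h1⟩, ⟨hp2, h2⟩⟩, hadj,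
              fun s hs hmem => hsep s (hmemP₂ s hs) hmem⟩
        have hcount : cutCard G t (Ppair.bind Q) ≤
            cutCard G S P₁ + cutCard G (t \ S) P₂ + (eB G S (t \ S) + eB G (t \ S) S) := by
          calc cutCard G t (Ppair.bind Q) ≤ _ := Finset.card_le_card hsubset
            _ ≤ _ := Finset.card_union_le _ _
            _ ≤ _ := by
                gcongr
                · exact Finset.card_union_le _ _
                · exact Finset.card_union_le _ _
        -- arithmetic
        have hcse : eB G (t \ S) S = eB G S (t \ S) := eB_comm G _ _
        have hat : eB G S t = eB G S S + eB G S (t \ S) := eB_sdiff_right G S hSt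
        have hct : eB G (t \ S) t = eB G (t \ S) S + eB G (t \ S) (t \ S) :=
          eB_sdiff_right G (t \ S) hSt
        have hvt : eB G t t = eB G S t + eB G (t \ S) t := eB_sdiff_left G hSt t
        set c : ℕ := eB G S (t \ S)
        set a' : ℕ := eB G S S
        set b' : ℕ := eB G (t \ S) (t \ S)
        have ha1 : 1 ≤ eB G S t := by
          rcases Nat.eq_zero_or_pos (eB G S t) with h | h
          · rw [h] at hcut
            push_cast at hcut
            rw [mul_zero] at hcut
            exact absurd hcut (not_lt.2 (Nat.cast_nonneg _))
          · exact h
        have harith := arith (φ := φ) (v := (eB G t t : ℝ)) (a := (eB G S t : ℝ))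
            (c := (c : ℝ)) (a' := (a' : ℝ)) (b' := (b' : ℝ)) hφ
            (by rw [hat]; push_cast; ring)
            (by rw [hvt, hct, hcse]; push_cast; ring)
            (by rcases Nat.eq_zero_or_pos a' with h | h
                · left; exact_mod_cast h
                · right; exact_mod_cast h)
            (by rcases Nat.eq_zero_or_pos b' with h | h
                · left; exact_mod_cast h
                · right; exact_mod_cast h)
            (by positivity)
            (by rw [hvt]; push_cast; linarith)
            (le_of_lt hcut)
            (by exact_mod_cast ha1)
        calc (cutCard G t (Ppair.bind Q) : ℝ)
            ≤ (cutCard G S P₁ : ℝ) + (cutCard G (t \ S) P₂ : ℝ) + 2 * c := by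
              have hc' := (Nat.cast_le (α := ℝ)).2 hcount
              rw [hcse] at hc'
              push_cast at hc' ⊢
              linarith
          _ ≤ 2 * φ * (a' : ℝ) * Real.logb 2 a' + 2 * φ * (b' : ℝ) * Real.logb 2 b'
                + 2 * c := by
              gcongr
          _ ≤ 2 * φ * (eB G t t) * Real.logb 2 (eB G t t) := by linarith
      · -- goodness of parts
        intro s hs
        rw [Finpartition.mem_bind] at hs
        obtain ⟨A, hA, hsA⟩ := hs
        by_cases h : A = S
        · subst h
          rw [hQS hA] at hsA
          exact hP₁good s hsA
        · have hA' : A = t \ S := by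
            rw [hparts] at hA
            rcases Finset.mem_insert.1 hA with h' | h'
            · exact h'
            · exact absurd (Finset.mem_singleton.1 h') h
          subst hA'
          rw [hQC hA] at hsA
          exact hP₂good s hsA

end Aux

theorem stmt1 {V : Type*} [Fintype V] [DecidableEq V]
    (G : SimpleGraph V) [DecidableRel G.Adj]
    (ε : ℝ) (hε0 : 0 < ε) (hε1 : ε < 1) :
    ∃ P : Finpartition (Finset.univ : Finset V),
      ((((Finset.univ ×ˢ Finset.univ).filter fun p : V × V =>
            G.Adj p.1 p.2 ∧ ∀ t ∈ P.parts, ¬ (p.1 ∈ t ∧ p.2 ∈ t)).card : ℝ)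
          ≤ ε * (2 * G.edgeFinset.card)) ∧
      ∀ t ∈ P.parts, t.card = 1 ∨
        ∀ S ⊆ t, S.Nonempty → S ≠ t →
          ε / (4 * Real.logb 2 (Fintype.card V)) *
              min (∑ v ∈ S, (eB G {v} t : ℝ)) (∑ v ∈ t \ S, (eB G {v} t : ℝ))
            ≤ (eB G S (t \ S) : ℝ) := by
  set n := Fintype.card V
  set φ : ℝ := ε / (4 * Real.logb 2 n) with hφdef
  have hLn : 0 ≤ Real.logb 2 (n : ℝ) := by
    rcases Nat.eq_zero_or_pos n with h | h
    · simp [h]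
    · exact Real.logb_nonneg (b := 2) (by norm_num) (by exact_mod_cast h)
  have hφ : 0 ≤ φ := div_nonneg hε0.le (by linarith)
  obtain ⟨P, hPcut, hPgood⟩ := decomp G φ hφ (Finset.univ : Finset V)
  refine ⟨P, ?_, ?_⟩
  · have hv : eB G Finset.univ Finset.univ = 2 * G.edgeFinset.card := eB_univ_univ G
    have hbound : 2 * φ * (eB G Finset.univ Finset.univ : ℝ) *
        Real.logb 2 (eB G Finset.univ Finset.univ) ≤
        ε * (2 * G.edgeFinset.card) := by
      have hv' : ((eB G Finset.univ Finset.univ : ℕ) : ℝ)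
          = 2 * (G.edgeFinset.card : ℝ) := by
        rw [hv]; push_cast; ring
      set v : ℕ := eB G Finset.univ Finset.univ with hvdef
      rcases Nat.eq_zero_or_pos v with h0 | h0
      · have he : (G.edgeFinset.card : ℝ) = 0 := by
          rw [h0] at hv'; push_cast at hv'; linarith
        rw [h0, he]
        push_cast
        simp
      · -- there is an edge, so n ≥ 2
        have hn2 : 2 ≤ n := by
          obtain ⟨p, hp⟩ := Finset.card_pos.1 h0
          simp only [Finset.mem_filter] at hp
          have := hp.2.ne
          exact Fintype.one_lt_card_iff.2 ⟨p.1, p.2, this⟩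
        have hLn1 : 1 ≤ Real.logb 2 (n : ℝ) := by
          rw [show (1:ℝ) = Real.logb 2 2 by simp]
          exact Real.logb_le_logb_of_le (by norm_num) (by norm_num) (by exact_mod_cast hn2)
        have hvn : v ≤ n * n := by
          calc v ≤ (Finset.univ ×ˢ (Finset.univ : Finset V)).card :=
                Finset.card_filter_le _ _
            _ = n * n := by rw [Finset.card_product]; simp [n]
        have hLv : Real.logb 2 (v : ℝ) ≤ 2 * Real.logb 2 (n : ℝ) := by
          have h1 : Real.logb 2 (v : ℝ) ≤ Real.logb 2 ((n : ℝ) * n) := by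
            apply Real.logb_le_logb_of_le (by norm_num) (by exact_mod_cast h0)
            exact_mod_cast hvn
          have h2 : Real.logb 2 ((n : ℝ) * n) = 2 * Real.logb 2 (n : ℝ) := by
            rw [Real.logb_mul (by positivity) (by positivity)]
            ring
          linarith
        have hmono : 2 * φ * (v : ℝ) * Real.logb 2 (v : ℝ) ≤
            2 * φ * (v : ℝ) * (2 * Real.logb 2 (n : ℝ)) := by
          have h3 : 0 ≤ 2 * φ * (v : ℝ) := by positivity
          exact mul_le_mul_of_nonneg_left hLv h3
        have hLnne : Real.logb 2 (n : ℝ) ≠ 0 := by linarith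
        have heq : 2 * φ * (v : ℝ) * (2 * Real.logb 2 (n : ℝ)) = ε * v := by
          rw [hφdef]
          field_simp
          ring
        calc 2 * φ * (v : ℝ) * Real.logb 2 (v : ℝ)
            ≤ 2 * φ * (v : ℝ) * (2 * Real.logb 2 (n : ℝ)) := hmono
          _ = ε * v := heq
          _ = ε * (2 * G.edgeFinset.card) := by rw [hv']
    calc ((((Finset.univ ×ˢ Finset.univ).filter fun p : V × V =>
            G.Adj p.1 p.2 ∧ ∀ t ∈ P.parts, ¬ (p.1 ∈ t ∧ p.2 ∈ t)).card : ℝ))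
        = (cutCard G Finset.univ P : ℝ) := by
          unfold cutCard
          norm_num
      _ ≤ _ := hPcut
      _ ≤ _ := hbound
  · intro t ht
    right
    intro S hS hSne hSneq
    have h1 : (∑ v ∈ S, (eB G {v} t : ℝ)) = (eB G S t : ℝ) := by
      rw [← Nat.cast_sum, sum_eB]
    have h2 : (∑ v ∈ t \ S, (eB G {v} t : ℝ)) = (eB G (t \ S) t : ℝ) := by
      rw [← Nat.cast_sum, sum_eB]
    rw [h1, h2]
    exact hPgood t ht S hS hSne hSneq
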